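/- Let α = (√5 - 1)/2 and let β be the unique real number in (0,1) with 1 - β - β² + β³ - β⁴ = 0. Let n ≥ 0 be a natural number and suppose β^(2^(-n)) < q < α^(2^(-n-1)). Then the greedy shooting sequence satisfies a_q(N) = t_N for all 0 ≤ N < 3·2^(n+1), and a_q(3·2^(n+1)) ≠ t_{3·2^(n+1)}. -/

import Mathlib

/-- The Thue-Morse sequence: `tm n = (-1)^(s₂ n)` where `s₂ n` is the sum of the
binary digits of `n`. -/
def tm (n : ℕ) : ℤ := (-1) ^ (Nat.digits 2 n).sum

/-- The partial sums `S q n = ∑_{0 ≤ j < n} tm j * q^j`. -/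
noncomputable def S (q : ℝ) (n : ℕ) : ℝ := ∑ j ∈ Finset.range n, (tm j : ℝ) * q ^ j

/-- The greedy shooting sequence: `a q N = 1` if `∑_{0 ≤ j < N} a q j * q^j ≤ 0`,
and `a q N = -1` otherwise. -/
noncomputable def a (q : ℝ) : ℕ → ℤ
  | N => if (∑ j : Fin N, (a q j : ℝ) * q ^ (j : ℕ)) ≤ 0 then 1 else -1
decreasing_by all_goals exact j.isLt

lemma tm_cases (m : ℕ) : tm m = 1 ∨ tm m = -1 := by
  unfold tm; rcases Nat.even_or_odd (Nat.digits 2 m).sum with h | h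
  · left; exact h.neg_one_pow
  · right; exact h.neg_one_pow

lemma tm_even (m : ℕ) : tm (2 * m) = tm m := by
  rcases Nat.eq_zero_or_pos m with rfl | hm
  · rfl
  · unfold tm
    rw [Nat.digits_def' (by norm_num : 1 < 2) (by omega : 0 < 2 * m)]
    simp [Nat.mul_div_cancel_left _ (by norm_num : 0 < 2), Nat.mul_mod_right]

lemma tm_odd (m : ℕ) : tm (2 * m + 1) = -tm m := by
  unfold tm
  rw [Nat.digits_def' (by norm_num : 1 < 2) (by omega : 0 < 2 * m + 1)]
  have h1 : (2 * m + 1) % 2 = 1 := by omega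
  have h2 : (2 * m + 1) / 2 = m := by omega
  rw [h1, h2]
  simp [pow_succ, pow_add]

lemma S_succ (q : ℝ) (m : ℕ) : S q (m + 1) = S q m + tm m * q ^ m := by
  simp [S, Finset.sum_range_succ]

lemma S_even (q : ℝ) (m : ℕ) : S q (2 * m) = (1 - q) * S (q ^ 2) m := by
  induction m with
  | zero => simp [S]
  | succ k ih =>
    have h : 2 * (k + 1) = (2 * k + 1) + 1 := by ring
    rw [h, S_succ, S_succ, tm_even, tm_odd, ih, S_succ]
    rw [show q ^ (2 * k + 1) = q * (q ^ 2) ^ k from by rw [pow_succ', pow_mul],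
        show q ^ (2 * k) = (q ^ 2) ^ k from by rw [← pow_mul]]
    push_cast
    ring

lemma tm_three_pow : ∀ k : ℕ, tm (3 * 2 ^ (k + 1)) = 1 := by
  intro k
  induction k with
  | zero => norm_num [tm]
  | succ j ih => rw [show 3 * 2 ^ (j + 1 + 1) = 2 * (3 * 2 ^ (j + 1)) from by ring, tm_even, ih]

/-- The two-sided sign/size conditions used in the induction. -/
def B (q : ℝ) (m : ℕ) : Prop :=
  (tm m = 1 → -(q ^ m) < (1 - q) * S q m ∧ S q m ≤ 0) ∧
  (tm m = -1 → 0 < S q m ∧ (1 - q) * S q m ≤ q ^ m)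

set_option maxHeartbeats 1000000 in
/-- Base case of the induction: explicit verification for `m < 6`. -/
lemma aux_base (β q : ℝ) (hβ0 : 0 < β) (hβ1 : β < 1)
    (hβ : 1 - β - β ^ 2 + β ^ 3 - β ^ 4 = 0)
    (hqβ : β < q) (hB2 : q ^ 2 + q ^ 4 < 1) :
    (∀ m < 6, B q m) ∧ 0 < S q 6 := by
  have hβA : 1 < β + β ^ 2 := by nlinarith [pow_pos hβ0 3]
  have hβ7 : β < 7 / 10 := by nlinarith [pow_pos hβ0 2, sq_nonneg (β - 7/10), sq_nonneg β]
  have hqpos : 0 < q := lt_trans hβ0 hqβ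
  have hA : 1 < q + q ^ 2 := by nlinarith
  have hq1' : q < 1 := by nlinarith
  have hqh : 1 / 2 < q := by nlinarith
  have t0 : tm 0 = 1 := by norm_num [tm]
  have t1 : tm 1 = -1 := by norm_num [tm]
  have t2 : tm 2 = -1 := by norm_num [tm]
  have t3 : tm 3 = 1 := by norm_num [tm]
  have t4 : tm 4 = -1 := by norm_num [tm]
  have t5 : tm 5 = 1 := by norm_num [tm]
  have s0 : S q 0 = 0 := by simp [S]
  have s1 : S q 1 = 1 := by rw [show (1:ℕ) = 0 + 1 from rfl, S_succ, s0, t0]; push_cast; ring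
  have s2 : S q 2 = 1 - q := by rw [show (2:ℕ) = 1 + 1 from rfl, S_succ, s1, t1]; push_cast; ring
  have s3 : S q 3 = 1 - q - q ^ 2 := by
    rw [show (3:ℕ) = 2 + 1 from rfl, S_succ, s2, t2]; push_cast; ring
  have s4 : S q 4 = 1 - q - q ^ 2 + q ^ 3 := by
    rw [show (4:ℕ) = 3 + 1 from rfl, S_succ, s3, t3]; push_cast; ring
  have s5 : S q 5 = 1 - q - q ^ 2 + q ^ 3 - q ^ 4 := by
    rw [show (5:ℕ) = 4 + 1 from rfl, S_succ, s4, t4]; push_cast; ring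
  have s6 : S q 6 = 1 - q - q ^ 2 + q ^ 3 - q ^ 4 + q ^ 5 := by
    rw [show (6:ℕ) = 5 + 1 from rfl, S_succ, s5, t5]; push_cast; ring
  constructor
  · intro m hm
    interval_cases m <;> unfold B
    · exact ⟨fun _ => by rw [s0]; norm_num, fun h => by rw [t0] at h; norm_num at h⟩
    · refine ⟨fun h => by rw [t1] at h; norm_num at h, fun _ => ?_⟩
      rw [s1]; constructor
      · norm_num
      · nlinarith
    · refine ⟨fun h => by rw [t2] at h; norm_num at h, fun _ => ?_⟩
      rw [s2]; constructor
      · linarith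
      · nlinarith
    · refine ⟨fun _ => ?_, fun h => by rw [t3] at h; norm_num at h⟩
      rw [s3]; constructor
      · nlinarith [sq_nonneg (q - 7/10)]
      · nlinarith
    · refine ⟨fun h => by rw [t4] at h; norm_num at h, fun _ => ?_⟩
      rw [s4]; constructor
      · nlinarith [sq_nonneg (1 - q)]
      · nlinarith [sq_nonneg (1 - q), sq_nonneg (q - 7/10)]
    · refine ⟨fun _ => ?_, fun h => by rw [t5] at h; norm_num at h⟩
      rw [s5]; constructor
      · nlinarith [sq_nonneg (q - 7/10), sq_nonneg (q - 1), sq_nonneg q,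
          mul_pos (mul_pos hqpos hqpos) hqpos]
      · have hβh : 1/2 < β := by nlinarith
        have hg : 0 < 1 + (q + β) - (q^2 + q*β + β^2) + (q^3 + q^2*β + q*β^2 + β^3) := by
          nlinarith [mul_pos hqpos hβ0, mul_pos (mul_pos hqpos hβ0) (by linarith : 0 < q + β - 1),
            mul_pos hqpos (by linarith : 0 < 1 - q), mul_pos hβ0 (by linarith : (0:ℝ) < 1 - β),
            pow_pos hqpos 3, pow_pos hβ0 3]
        have hkey := mul_pos (by linarith : 0 < q - β) hg
        nlinarith [hβ, hkey]
  · rw [s6]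
    nlinarith

set_option maxHeartbeats 1000000 in
/-- Inductive step: transferring the conditions from `q ^ 2` to `q`. -/
lemma aux_step (q : ℝ) (hqh : 1 / 2 < q) (hq1 : q < 1) (M : ℕ)
    (hB : ∀ m < M, B (q ^ 2) m) (hS : 0 < S (q ^ 2) M) :
    (∀ m < 2 * M, B q m) ∧ 0 < S q (2 * M) := by
  have hq0 : (0:ℝ) < q := by linarith
  constructor
  · intro N hN
    rcases Nat.even_or_odd N with ⟨m, hm⟩ | ⟨m, hm⟩
    · have hm2 : N = 2 * m := by omega
      subst hm2
      have hmlt : m < M := by omega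
      obtain ⟨c1, c2⟩ := hB m hmlt
      unfold B
      rw [tm_even, S_even, pow_mul]
      set s := S (q ^ 2) m with hs
      set p := (q ^ 2) ^ m with hpp
      have hppos : 0 < p := by positivity
      rcases tm_cases m with ht | ht
      · refine ⟨fun _ => ?_, fun h => by rw [ht] at h; norm_num at h⟩
        obtain ⟨d1, d2⟩ := c1 ht
        refine ⟨?_, mul_nonpos_of_nonneg_of_nonpos (by linarith) d2⟩
        nlinarith [mul_nonpos_of_nonneg_of_nonpos
          (by nlinarith : (0:ℝ) ≤ 2 * q * (1 - q)) d2]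
      · refine ⟨fun h => by rw [ht] at h; norm_num at h, fun _ => ?_⟩
        obtain ⟨d1, d2⟩ := c2 ht
        refine ⟨mul_pos (by linarith) d1, ?_⟩
        nlinarith [mul_nonneg (by nlinarith : (0:ℝ) ≤ 2 * q * (1 - q)) d1.le]
    · have hm2 : N = 2 * m + 1 := hm
      subst hm2
      have hmlt : m < M := by omega
      obtain ⟨c1, c2⟩ := hB m hmlt
      unfold B
      rw [tm_odd, S_succ, tm_even, S_even,
        show q ^ (2 * m) = (q ^ 2) ^ m from by rw [pow_mul],
        show q ^ (2 * m + 1) = q * (q ^ 2) ^ m from by rw [pow_succ', pow_mul]]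
      set s := S (q ^ 2) m with hs
      set p := (q ^ 2) ^ m with hpp
      have hppos : 0 < p := by positivity
      rcases tm_cases m with ht | ht
      · refine ⟨fun h => by rw [ht] at h; norm_num at h, fun _ => ?_⟩
        obtain ⟨d1, d2⟩ := c1 ht
        rw [ht]
        push_cast
        constructor
        · nlinarith [d1, hppos]
        · nlinarith [mul_nonpos_of_nonneg_of_nonpos (by nlinarith : (0:ℝ) ≤ (1-q)^2) d2]
      · refine ⟨fun _ => ?_, fun h => by rw [ht] at h; norm_num at h⟩
        obtain ⟨d1, d2⟩ := c2 ht
        rw [ht]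
        push_cast
        constructor
        · nlinarith [mul_nonneg (by nlinarith : (0:ℝ) ≤ (1-q)^2) d1.le, d1]
        · nlinarith [d2, d1, mul_pos (by nlinarith : (0:ℝ) < q * (1 - q)) d1]
  · rw [S_even]
    exact mul_pos (by linarith) hS

set_option maxHeartbeats 1000000 in
/-- The main inductive lemma. -/
lemma aux (β : ℝ) (hβ0 : 0 < β) (hβ1 : β < 1)
    (hβ : 1 - β - β ^ 2 + β ^ 3 - β ^ 4 = 0) :
    ∀ n : ℕ, ∀ q : ℝ, β ^ ((2 : ℝ) ^ (-(n : ℤ))) < q →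
    q < ((Real.sqrt 5 - 1) / 2) ^ ((2 : ℝ) ^ (-(n : ℤ) - 1)) →
    (∀ m < 3 * 2 ^ (n + 1), B q m) ∧ 0 < S q (3 * 2 ^ (n + 1)) := by
  have hβA : 1 < β + β ^ 2 := by nlinarith [pow_pos hβ0 3]
  have h5 : Real.sqrt 5 ^ 2 = 5 := Real.sq_sqrt (by norm_num)
  have h5n : (0 : ℝ) ≤ Real.sqrt 5 := Real.sqrt_nonneg 5
  have h5l : (2 : ℝ) < Real.sqrt 5 := by nlinarith
  have h5u : Real.sqrt 5 < 3 := by nlinarith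
  set al : ℝ := (Real.sqrt 5 - 1) / 2 with hal
  have hal0 : 0 < al := by rw [hal]; linarith
  have hal1 : al < 1 := by rw [hal]; linarith
  have halsq : al + al ^ 2 = 1 := by rw [hal]; nlinarith
  have hzpow : ∀ k : ℤ, (2 : ℝ) ^ (k - 1) * 2 = (2 : ℝ) ^ k := by
    intro k
    rw [← zpow_add_one₀ (by norm_num : (2:ℝ) ≠ 0) (k - 1)]
    norm_num
  intro n
  induction n with
  | zero =>
    intro q hq0 hq1
    rw [show (-(0:ℕ) : ℤ) = 0 from by norm_num, zpow_zero, Real.rpow_one] at hq0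
    rw [show (-(0:ℕ) : ℤ) - 1 = -1 from by norm_num, zpow_neg_one] at hq1
    have hqpos : 0 < q := lt_trans hβ0 hq0
    have hq2 : q ^ 2 < al := by
      have h1 : (al ^ ((2:ℝ)⁻¹)) ^ 2 = al := by
        rw [← Real.rpow_natCast (al ^ ((2:ℝ)⁻¹)) 2, ← Real.rpow_mul hal0.le]
        norm_num
      calc q ^ 2 < (al ^ ((2:ℝ)⁻¹)) ^ 2 :=
            pow_lt_pow_left₀ hq1 hqpos.le (by norm_num)
        _ = al := h1
    have hB2 : q ^ 2 + q ^ 4 < 1 := by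
      nlinarith [pow_lt_pow_left₀ hq2 (sq_nonneg q) (by norm_num : (2:ℕ) ≠ 0)]
    exact aux_base β q hβ0 hβ1 hβ hq0 hB2
  | succ n ih =>
    intro q hq0 hq1
    have hqpos : 0 < q := lt_trans (Real.rpow_pos_of_pos hβ0 _) hq0
    have hrq0 : β ^ ((2 : ℝ) ^ (-(n : ℤ))) < q ^ 2 := by
      have he : (-(↑(n+1) : ℤ)) = -(n : ℤ) - 1 := by push_cast; ring
      rw [he] at hq0
      have h1 : (β ^ ((2:ℝ) ^ (-(n:ℤ) - 1))) ^ 2 = β ^ ((2:ℝ) ^ (-(n:ℤ))) := by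
        rw [← Real.rpow_natCast (β ^ ((2:ℝ) ^ (-(n:ℤ) - 1))) 2, ← Real.rpow_mul hβ0.le]
        rw [show ((2:ℕ):ℝ) = 2 from by norm_num, hzpow]
      rw [← h1]
      exact pow_lt_pow_left₀ hq0 (Real.rpow_pos_of_pos hβ0 _).le (by norm_num)
    have hrq1 : q ^ 2 < al ^ ((2 : ℝ) ^ (-(n : ℤ) - 1)) := by
      have he : (-(↑(n+1) : ℤ) - 1) = (-(n : ℤ) - 1) - 1 := by push_cast; ring
      rw [he] at hq1
      have h1 : (al ^ ((2:ℝ) ^ ((-(n:ℤ) - 1) - 1))) ^ 2 = al ^ ((2:ℝ) ^ (-(n:ℤ) - 1)) := by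
        rw [← Real.rpow_natCast (al ^ ((2:ℝ) ^ ((-(n:ℤ) - 1) - 1))) 2, ← Real.rpow_mul hal0.le]
        rw [show ((2:ℕ):ℝ) = 2 from by norm_num, hzpow]
      rw [← h1]
      exact pow_lt_pow_left₀ hq1 hqpos.le (by norm_num)
    obtain ⟨hB, hS⟩ := ih (q ^ 2) hrq0 hrq1
    have hβh : 1 / 2 < β := by nlinarith
    have hqh : 1 / 2 < q := by
      calc (1:ℝ)/2 < β := hβh
        _ = β ^ (1:ℝ) := (Real.rpow_one β).symm
        _ ≤ β ^ ((2:ℝ) ^ (-(↑(n+1):ℤ))) := by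
            apply Real.rpow_le_rpow_of_exponent_ge hβ0 hβ1.le
            apply zpow_le_one_of_nonpos₀ (by norm_num : (1:ℝ) ≤ 2)
            omega
        _ < q := hq0
    have hq1' : q < 1 := by
      calc q < al ^ ((2:ℝ) ^ (-(↑(n+1):ℤ) - 1)) := hq1
        _ < 1 := Real.rpow_lt_one hal0.le hal1 (by positivity)
    have hbig : 3 * 2 ^ (n + 1 + 1) = 2 * (3 * 2 ^ (n + 1)) := by ring
    rw [hbig]
    exact aux_step q hqh hq1' (3 * 2 ^ (n + 1)) hB hS

theorem main_greedy_three (β : ℝ) (hβ0 : 0 < β) (hβ1 : β < 1)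
    (hβ : 1 - β - β ^ 2 + β ^ 3 - β ^ 4 = 0)
    (n : ℕ) (q : ℝ)
    (hq0 : β ^ ((2 : ℝ) ^ (-(n : ℤ))) < q)
    (hq1 : q < ((Real.sqrt 5 - 1) / 2) ^ ((2 : ℝ) ^ (-(n : ℤ) - 1))) :
    (∀ N < 3 * 2 ^ (n + 1), a q N = tm N) ∧
      a q (3 * 2 ^ (n + 1)) ≠ tm (3 * 2 ^ (n + 1)) := by
  obtain ⟨hB, hS⟩ := aux β hβ0 hβ1 hβ n q hq0 hq1
  have agree : ∀ N < 3 * 2 ^ (n + 1), a q N = tm N := by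
    intro N
    induction N using Nat.strong_induction_on with
    | _ N ihN =>
      intro hN
      have hsum : (∑ j : Fin N, (a q j : ℝ) * q ^ (j : ℕ)) = S q N := by
        rw [Fin.sum_univ_eq_sum_range (fun j => (a q j : ℝ) * q ^ j)]
        apply Finset.sum_congr rfl
        intro j hj
        rw [ihN j (Finset.mem_range.1 hj) (lt_trans (Finset.mem_range.1 hj) hN)]
      rw [a, hsum]
      rcases tm_cases N with h | h
      · rw [h, if_pos ((hB N hN).1 h).2]
      · rw [h, if_neg (not_le.2 ((hB N hN).2 h).1)]
  refine ⟨agree, ?_⟩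
  have hsum : (∑ j : Fin (3 * 2 ^ (n + 1)), (a q j : ℝ) * q ^ (j : ℕ)) = S q (3 * 2 ^ (n + 1)) := by
    rw [Fin.sum_univ_eq_sum_range (fun j => (a q j : ℝ) * q ^ j)]
    apply Finset.sum_congr rfl
    intro j hj
    rw [agree j (Finset.mem_range.1 hj)]
  rw [a, hsum, if_neg (not_le.2 hS), tm_three_pow]
  norm_num
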